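/- Let A : ℓ¹(ℕ) → Y be a bounded linear operator, x† ∈ ℓ¹(ℕ), M ⊆ ℕ a finite index set, c ∈ [0,1), and η ∈ Y* with ‖η‖ ≤ γ, P_S A*η = ξ and ‖(I − P_S) A*η‖_∞ ≤ c, where ξ = P_M sgn(x − x†) and S = supp ξ. Then for all x ∈ ℓ¹(ℕ): ‖P_M(x − x†)‖₁ ≤ c(‖(I − P_M)x‖₁ + ‖(I − P_M)x†‖₁) + γ‖Ax − Ax†‖_Y. -/

import Mathlib

noncomputable section

abbrev L1 : Type := lp (fun _ : ℕ => ℝ) 1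

def e (k : ℕ) : L1 := lp.single 1 k 1

/-- `‖P_M x‖₁ = ∑_{k ∈ M} |x_k|`, the ℓ¹-norm of the projection of `x` onto the
index set `M`. -/
def norm1On (M : Set ℕ) (x : L1) : ℝ :=
  ∑' k, M.indicator (fun k => |(x : ℕ → ℝ) k|) k

-- auxiliary: summability of abs of an ℓ¹ element
lemma summable_abs_L1 (x : L1) : Summable (fun k => |(x : ℕ → ℝ) k|) := by
  have h := (lp.memℓp x)
  rw [memℓp_gen_iff (by simp)] at h
  simpa using h


/-- The key estimate: if `ξ = P_M sgn(x - x†)` and `η ∈ Y*` satisfies `‖η‖ ≤ γ`,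
`P_{supp ξ} A*η = ξ` and `‖(I - P_{supp ξ}) A*η‖_∞ ≤ c` (componentwise, with
`[A*η]_k = η (A e⁽ᵏ⁾)`), then
`‖P_M(x - x†)‖₁ ≤ c (‖(I-P_M)x‖₁ + ‖(I-P_M)x†‖₁) + γ ‖Ax - Ax†‖`. -/
theorem stmt11 {Y : Type*} [NormedAddCommGroup Y] [NormedSpace ℝ Y]
    (A : L1 →L[ℝ] Y) (x xdag : L1) (M : Finset ℕ)
    (c : ℝ) (hc0 : 0 ≤ c) (hc1 : c < 1) (γ : ℝ) (hγ : 0 < γ)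
    (ξ : ℕ → ℝ)
    (hξ : ∀ k, ξ k = if k ∈ M then Real.sign ((x : ℕ → ℝ) k - (xdag : ℕ → ℝ) k) else 0)
    (η : StrongDual ℝ Y) (hηnorm : ‖η‖ ≤ γ)
    (hηsupp : ∀ k, ξ k ≠ 0 → η (A (e k)) = ξ k)
    (hηout : ∀ k, ξ k = 0 → |η (A (e k))| ≤ c) :
    norm1On (↑M) (x - xdag) ≤
      c * (norm1On (↑M)ᶜ x + norm1On (↑M)ᶜ xdag) + γ * ‖A x - A xdag‖ := by

  set z : L1 := x - xdag with hz
  set φ : ℕ → ℝ := fun k => η (A (e k)) with hφ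
  have hφk : ∀ k, φ k = η (A (e k)) := fun k => rfl
  have hzk : ∀ k, (z : ℕ → ℝ) k = (x : ℕ → ℝ) k - (xdag : ℕ → ℝ) k := by
    intro k; simp [hz]
  -- |φ k| ≤ 1 for all k
  have hφ1 : ∀ k, |φ k| ≤ 1 := by
    intro k
    by_cases h : ξ k = 0
    · exact (hηout k h).trans hc1.le
    · rw [hφk, hηsupp k h, hξ k]
      split
      · rcases Real.sign_apply_eq _ with h1 | h1 | h1 <;> rw [h1] <;> norm_num
      · norm_num
  -- HasSum of z k * φ k to η (A z)
  have hsum0 : HasSum (fun k => lp.single 1 k ((z : ℕ → ℝ) k)) z :=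
    lp.hasSum_single (by norm_num) z
  have hsum1 : HasSum (fun k => (z : ℕ → ℝ) k * φ k) (η (A z)) := by
    have := (η.comp A).hasSum hsum0
    convert this using 2 with k
    pick_goal 2
    have : lp.single (E := fun _ : ℕ => ℝ) 1 k ((z : ℕ → ℝ) k) = (z : ℕ → ℝ) k • e k := by
      rw [e, ← lp.single_smul]; norm_num
    rw [this]
    simp [mul_comm]
    · exact Or.inl rfl
    all_goals rfl
  -- summability facts
  have hzabs : Summable (fun k => |(z : ℕ → ℝ) k|) := summable_abs_L1 z
  have hg : Summable (fun k => (z : ℕ → ℝ) k * φ k) := hsum1.summable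
  set g : ℕ → ℝ := fun k => (z : ℕ → ℝ) k * φ k with hgdef
  -- on M, g k = |z k|
  have hgM : ∀ k ∈ M, g k = |(z : ℕ → ℝ) k| := by
    intro k hk
    by_cases hzk0 : (z : ℕ → ℝ) k = 0
    · simp [hgdef, hzk0]
    · have hξk : ξ k = Real.sign ((z : ℕ → ℝ) k) := by rw [hξ k, if_pos hk, hzk k]
      have hξne : ξ k ≠ 0 := by
        rw [hξk]; exact fun h => hzk0 (Real.sign_eq_zero_iff.mp h)
      have : φ k = Real.sign ((z : ℕ → ℝ) k) := by rw [hφk, hηsupp k hξne, hξk]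
      rw [hgdef]; simp only [this]
      rcases lt_trichotomy ((z : ℕ → ℝ) k) 0 with h | h | h
      · rw [Real.sign_of_neg h, abs_of_neg h]; ring
      · exact absurd h hzk0
      · rw [Real.sign_of_pos h, abs_of_pos h]; ring
  -- split tsum
  have hsplit : η (A z) = (∑' k, (M : Set ℕ).indicator g k) + ∑' k, ((M : Set ℕ)ᶜ).indicator g k := by
    rw [← hsum1.tsum_eq]
    rw [← Summable.tsum_add (hg.indicator _) (hg.indicator _)]
    congr 1; funext k
    simp [Set.indicator_self_add_compl (M : Set ℕ) g]
  have hMker : (∑' k, (M : Set ℕ).indicator g k) = norm1On (↑M) z := by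
    rw [norm1On]
    congr 1; funext k
    by_cases hk : k ∈ (M : Set ℕ)
    · rw [Set.indicator_of_mem hk, Set.indicator_of_mem hk, hgM k hk]
    · rw [Set.indicator_of_notMem hk, Set.indicator_of_notMem hk]
  -- bound the tail
  have htail : |∑' k, ((M : Set ℕ)ᶜ).indicator g k| ≤ c * (norm1On (↑M)ᶜ x + norm1On (↑M)ᶜ xdag) := by
    have h1 : |∑' k, ((M : Set ℕ)ᶜ).indicator g k| ≤ ∑' k, ((M : Set ℕ)ᶜ).indicator (fun k => c * (|(x : ℕ → ℝ) k| + |(xdag : ℕ → ℝ) k|)) k := by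
      have habs : |∑' k, ((M : Set ℕ)ᶜ).indicator g k| ≤ ∑' k, |((M : Set ℕ)ᶜ).indicator g k| := by
        rw [← Real.norm_eq_abs]
        exact (norm_tsum_le_tsum_norm (by simpa [Real.norm_eq_abs] using (hg.indicator _).abs))
      refine habs.trans ?_
      refine Summable.tsum_le_tsum ?_ ((hg.indicator _).abs) ?_
      · intro k
        by_cases hk : k ∈ ((M : Set ℕ)ᶜ)
        · rw [Set.indicator_of_mem hk, Set.indicator_of_mem hk]
          have hξ0 : ξ k = 0 := by
            rw [hξ k, if_neg (by simpa using hk)]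
          have hφc : |φ k| ≤ c := hηout k hξ0
          calc |g k| = |(z : ℕ → ℝ) k| * |φ k| := by rw [hgdef]; exact abs_mul _ _
            _ ≤ |(z : ℕ → ℝ) k| * c := by
                exact mul_le_mul_of_nonneg_left hφc (abs_nonneg _)
            _ ≤ (|(x : ℕ → ℝ) k| + |(xdag : ℕ → ℝ) k|) * c := by
                refine mul_le_mul_of_nonneg_right ?_ hc0
                rw [hzk k]; exact abs_sub _ _
            _ = c * (|(x : ℕ → ℝ) k| + |(xdag : ℕ → ℝ) k|) := by ring
        · rw [Set.indicator_of_notMem hk, Set.indicator_of_notMem hk]; simp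
      · refine Summable.indicator ?_ _
        exact (((summable_abs_L1 x).add (summable_abs_L1 xdag)).mul_left c)
    refine h1.trans ?_
    rw [norm1On, norm1On, ← Summable.tsum_add ((summable_abs_L1 x).indicator _) ((summable_abs_L1 xdag).indicator _),
      ← tsum_mul_left]
    refine le_of_eq ?_
    congr 1; funext k
    by_cases hk : k ∈ ((M : Set ℕ)ᶜ)
    · simp [Set.indicator_of_mem hk]
    · simp [Set.indicator_of_notMem hk]
  -- bound η (A z)
  have hAz : |η (A z)| ≤ γ * ‖A x - A xdag‖ := by
    have : A z = A x - A xdag := by rw [hz, map_sub]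
    rw [this]
    calc |η (A x - A xdag)| ≤ ‖η‖ * ‖A x - A xdag‖ := η.le_opNorm _
      _ ≤ γ * ‖A x - A xdag‖ := mul_le_mul_of_nonneg_right hηnorm (norm_nonneg _)
  -- combine
  have : norm1On (↑M) z = η (A z) - ∑' k, ((M : Set ℕ)ᶜ).indicator g k := by
    rw [hsplit, hMker]; ring
  rw [this]
  calc η (A z) - ∑' k, ((M : Set ℕ)ᶜ).indicator g k
      ≤ |η (A z)| + |∑' k, ((M : Set ℕ)ᶜ).indicator g k| := by
        have := le_abs_self (η (A z))
        have := neg_abs_le (∑' k, ((M : Set ℕ)ᶜ).indicator g k)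
        linarith
    _ ≤ γ * ‖A x - A xdag‖ + c * (norm1On (↑M)ᶜ x + norm1On (↑M)ᶜ xdag) := add_le_add hAz htail
    _ = c * (norm1On (↑M)ᶜ x + norm1On (↑M)ᶜ xdag) + γ * ‖A x - A xdag‖ := by ring
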